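/- Suppose f is continuous on the closed strip a ≤ Re(s) ≤ b, holomorphic in its interior, of finite order there, and satisfies |f(a+it)| ≤ A(1+|t|)^α and |f(b+it)| ≤ B for all real t. Then for a ≤ σ ≤ b, |f(σ+it)| ≪ (1+|t|)^{α(b−σ)/(b−a)}, with implied constant depending only on A, B, α, a, b. -/

import Mathlib

open Complex

open Real Set Filter

/-- For `z` with positive real part, `|arg z| * re z ≤ (π/2) * |im z|`. -/
lemma PL_aux_arg {z : ℂ} (hz : 0 < z.re) : |z.arg| * z.re ≤ π / 2 * |z.im| := by
  have hz0 : z ≠ 0 := fun h => by simp [h] at hz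
  have habsz : 0 < ‖z‖ := norm_pos_iff.mpr hz0
  have habs : |z.arg| ≤ π / 2 := Complex.abs_arg_le_pi_div_two_iff.mpr hz.le
  have hsin : Real.sin |z.arg| = |z.im| / ‖z‖ := by
    rcases le_or_gt 0 z.arg with h | h
    · have him : 0 ≤ z.im := (Complex.arg_nonneg_iff).mp h
      rw [_root_.abs_of_nonneg h, Complex.sin_arg, _root_.abs_of_nonneg him]
    · have him : z.im < 0 := by
        by_contra hc
        exact absurd ((Complex.arg_nonneg_iff).mpr (not_lt.mp hc)) (not_le.mpr h)
      rw [_root_.abs_of_neg h, Real.sin_neg, Complex.sin_arg, abs_of_neg him]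
      ring
  have key : 2 / π * |z.arg| ≤ |z.im| / ‖z‖ := by
    rw [← hsin]
    exact Real.mul_le_sin (abs_nonneg _) habs
  have key' : 2 / π * |z.arg| * ‖z‖ ≤ |z.im| := by
    rw [← le_div_iff₀ habsz]
    exact key
  have key2 : |z.arg| * ‖z‖ ≤ π / 2 * |z.im| := by
    have hpi := Real.pi_pos
    have := mul_le_mul_of_nonneg_left key' (le_of_lt (by positivity : (0:ℝ) < π / 2))
    calc |z.arg| * ‖z‖ = π / 2 * (2 / π * |z.arg| * ‖z‖) := by
          field_simp
    _ ≤ π / 2 * |z.im| := this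
  calc |z.arg| * z.re ≤ |z.arg| * ‖z‖ :=
        mul_le_mul_of_nonneg_left (Complex.re_le_norm z) (abs_nonneg _)
  _ ≤ π / 2 * |z.im| := key2

/-- Basic estimates for `Q² - s²` on the strip `|re s| ≤ m`, `Q = m+1`. -/
lemma PL_aux_strip (m : ℝ) (hm : 0 ≤ m) (s : ℂ) (hs : |s.re| ≤ m) :
    1 + s.im ^ 2 ≤ (((m+1:ℝ):ℂ) ^ 2 - s ^ 2).re ∧
    ‖((m+1:ℝ):ℂ) ^ 2 - s ^ 2‖ ≤ 2 * (m+1) ^ 2 * (1 + |s.im|) ^ 2 ∧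
    (1 + |s.im|) ^ 2 ≤ 2 * ‖((m+1:ℝ):ℂ) ^ 2 - s ^ 2‖ ∧
    |s.im * (((m+1:ℝ):ℂ) ^ 2 - s ^ 2).arg| ≤ π * m := by
  set Q : ℝ := m + 1 with hQ
  set z : ℂ := ((Q:ℝ):ℂ) ^ 2 - s ^ 2 with hzdef
  have hsre : s.re ^ 2 ≤ m ^ 2 := by
    have := abs_le.mp hs
    nlinarith [this.1, this.2]
  have hzre : z.re = Q ^ 2 - s.re ^ 2 + s.im ^ 2 := by
    simp [hzdef, pow_two, Complex.mul_re, Complex.mul_im, Complex.sub_re]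
    ring
  have hzim : z.im = -(2 * s.re * s.im) := by
    simp [hzdef, pow_two, Complex.mul_re, Complex.mul_im, Complex.sub_im]
    ring
  have h1 : 1 + s.im ^ 2 ≤ z.re := by rw [hzre]; nlinarith
  have hrepos : 0 < z.re := lt_of_lt_of_le (by positivity) h1
  have habs_low : 1 + s.im ^ 2 ≤ ‖z‖ := le_trans h1 (Complex.re_le_norm z)
  have habspos : 0 < ‖z‖ := lt_of_lt_of_le (by positivity) habs_low
  refine ⟨h1, ?_, ?_, ?_⟩
  · have hQpos : (0:ℝ) < Q := by rw [hQ]; linarith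
    have hb : ‖z‖ ≤ Q ^ 2 + (s.re ^ 2 + s.im ^ 2) := by
      have tri : ‖z‖ ≤ ‖((Q:ℝ):ℂ) ^ 2‖ + ‖s ^ 2‖ := by
        rw [hzdef]
        exact norm_sub_le _ _
      have e2 : ‖((Q:ℝ):ℂ) ^ 2‖ = Q ^ 2 := by
        rw [norm_pow, Complex.norm_real, Real.norm_eq_abs, _root_.abs_of_pos hQpos]
      have e3 : ‖s ^ 2‖ = s.re ^ 2 + s.im ^ 2 := by
        rw [norm_pow, Complex.sq_norm, Complex.normSq_apply]; ring
      rw [e2, e3] at tri; exact tri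
    have hQ1 : 1 ≤ Q := by rw [hQ]; linarith
    nlinarith [_root_.sq_abs s.im, abs_nonneg s.im, sq_nonneg s.im]
  · have : (1 + |s.im|) ^ 2 ≤ 2 * (1 + s.im ^ 2) := by
      nlinarith [_root_.sq_abs s.im, sq_nonneg (1 - |s.im|), abs_nonneg s.im]
    linarith [habs_low]
  · have harg := PL_aux_arg hrepos
    have him : |z.im| ≤ 2 * m * |s.im| := by
      rw [hzim, abs_neg]
      calc |2 * s.re * s.im| = 2 * |s.re| * |s.im| := by
            rw [abs_mul, abs_mul, _root_.abs_two]
      _ ≤ 2 * m * |s.im| := by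
            have := abs_nonneg s.im
            nlinarith [abs_nonneg s.re]
    have e1 : |s.im * z.arg| = |s.im| * |z.arg| := abs_mul _ _
    rw [e1]
    have hpi := Real.pi_pos
    have c1 : |s.im| * |z.arg| * (1 + s.im ^ 2) ≤ |s.im| * (|z.arg| * z.re) := by
      have := mul_le_mul_of_nonneg_left h1 (mul_nonneg (abs_nonneg s.im) (abs_nonneg z.arg))
      calc |s.im| * |z.arg| * (1 + s.im ^ 2) ≤ |s.im| * |z.arg| * z.re := this
      _ = |s.im| * (|z.arg| * z.re) := by ring
    have c2 : |s.im| * (|z.arg| * z.re) ≤ |s.im| * (π / 2 * |z.im|) :=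
      mul_le_mul_of_nonneg_left harg (abs_nonneg _)
    have c3 : |s.im| * (π / 2 * |z.im|) ≤ |s.im| * (π / 2 * (2 * m * |s.im|)) :=
      mul_le_mul_of_nonneg_left (mul_le_mul_of_nonneg_left him (by positivity)) (abs_nonneg _)
    have c4 : |s.im| * (π / 2 * (2 * m * |s.im|)) = π * m * (|s.im| * |s.im|) := by ring
    have c5 : π * m * (|s.im| * |s.im|) ≤ π * m * (1 + s.im ^ 2) := by
      have : |s.im| * |s.im| = s.im ^ 2 := by rw [← _root_.sq_abs]; ring
      rw [this]
      nlinarith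
    have hfinal : |s.im| * |z.arg| * (1 + s.im ^ 2) ≤ π * m * (1 + s.im ^ 2) := by
      calc |s.im| * |z.arg| * (1 + s.im ^ 2) ≤ |s.im| * (|z.arg| * z.re) := c1
      _ ≤ |s.im| * (π / 2 * |z.im|) := c2
      _ ≤ |s.im| * (π / 2 * (2 * m * |s.im|)) := c3
      _ = π * m * (|s.im| * |s.im|) := c4
      _ ≤ π * m * (1 + s.im ^ 2) := c5
    have hpos : (0:ℝ) < 1 + s.im ^ 2 := by positivity
    exact le_of_mul_le_mul_right hfinal hpos

lemma PL_aux_normE (κ b : ℝ) (s z : ℂ) :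
    ‖Complex.exp (-(κ:ℂ) * ((b:ℂ) - s) * Complex.log z)‖
      = Real.exp (-(κ * ((b - s.re) * Real.log (‖z‖) + s.im * z.arg))) := by
  rw [Complex.norm_exp]
  congr 1
  simp [Complex.mul_re, Complex.mul_im, Complex.sub_re, Complex.sub_im, Complex.log_re,
    Complex.log_im]
  ring

set_option maxHeartbeats 1000000 in
/-- Phragmén–Lindelöf convexity principle on a vertical strip: if `f` is continuous on the
closed strip `a ≤ Re s ≤ b`, holomorphic in its interior, of finite order there, and
satisfies `|f(a+it)| ≤ A(1+|t|)^α` and `|f(b+it)| ≤ B`, then for `a ≤ σ ≤ b` one has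
`|f(σ+it)| ≪ (1+|t|)^{α(b-σ)/(b-a)}`, with implied constant depending only on
`A, B, α, a, b`. -/
theorem phragmen_lindelof_strip (a b α A B : ℝ) (hab : a < b)
    (hα : 0 ≤ α) (hA : 0 ≤ A) (hB : 0 ≤ B) :
    ∃ C : ℝ, 0 < C ∧ ∀ f : ℂ → ℂ,
      ContinuousOn f {s : ℂ | a ≤ s.re ∧ s.re ≤ b} →
      DifferentiableOn ℂ f {s : ℂ | a < s.re ∧ s.re < b} →
      (∃ C₀ c : ℝ, 0 ≤ c ∧ ∀ s : ℂ, a ≤ s.re → s.re ≤ b →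
        ‖f s‖ ≤ C₀ * Real.exp (|s.im| ^ c)) →
      (∀ t : ℝ, ‖f (a + t * I)‖ ≤ A * (1 + |t|) ^ α) →
      (∀ t : ℝ, ‖f (b + t * I)‖ ≤ B) →
      ∀ σ t : ℝ, a ≤ σ → σ ≤ b →
        ‖f (σ + t * I)‖ ≤ C * (1 + |t|) ^ (α * (b - σ) / (b - a)) := by
  have hba : 0 < b - a := sub_pos.mpr hab
  set m : ℝ := max |a| |b| with hm_def
  clear_value m
  have hm0 : 0 ≤ m := by rw [hm_def]; exact le_trans (abs_nonneg a) (le_max_left _ _)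
  set Q : ℝ := m + 1 with hQ_def
  clear_value Q
  have hQ1 : (1:ℝ) ≤ Q := by rw [hQ_def]; linarith
  set κ : ℝ := α / (2 * (b - a)) with hκ_def
  clear_value κ
  have hκ0 : 0 ≤ κ := by
    rw [hκ_def]; exact div_nonneg hα (by linarith)
  set K : ℝ := π * m with hK_def
  clear_value K
  have hK0 : 0 ≤ K := by rw [hK_def]; exact mul_nonneg Real.pi_pos.le hm0
  have hκba : κ * (b - a) = α / 2 := by rw [hκ_def]; field_simp
  have hmem : ∀ s : ℂ, a ≤ s.re → s.re ≤ b → |s.re| ≤ m := by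
    intro s h1 h2
    refine abs_le.mpr ⟨?_, ?_⟩
    · have h3 := neg_abs_le a
      have h4 : |a| ≤ m := by rw [hm_def]; exact le_max_left _ _
      linarith
    · have h3 := le_abs_self b
      have h4 : |b| ≤ m := by rw [hm_def]; exact le_max_right _ _
      linarith
  set M : ℝ := max (A * (2:ℝ) ^ (α / 2)) B * Real.exp (κ * K) with hM_def
  clear_value M
  have hM0 : 0 ≤ M := by rw [hM_def]; exact mul_nonneg (le_trans hB (le_max_right _ _)) (Real.exp_nonneg _)
  have hC1 : 0 ≤ M * Real.exp (κ * K) * (2 * Q ^ 2) ^ (α / 2) :=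
    mul_nonneg (mul_nonneg hM0 (Real.exp_nonneg _)) (Real.rpow_nonneg (by positivity) _)
  refine ⟨M * Real.exp (κ * K) * (2 * Q ^ 2) ^ (α / 2) + 1, by linarith, ?_⟩
  intro f hcont hdiff hord hfa hfb σ t hσa hσb
  set Z : ℂ → ℂ := fun s => ((Q:ℝ):ℂ) ^ 2 - s ^ 2 with hZ_def
  clear_value Z
  set E : ℂ → ℂ := fun s => Complex.exp (-(κ:ℂ) * ((b:ℂ) - s) * Complex.log (Z s)) with hE_def
  clear_value E
  have facts : ∀ s : ℂ, a ≤ s.re → s.re ≤ b →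
      (1 + s.im ^ 2 ≤ (Z s).re ∧
       ‖Z s‖ ≤ 2 * Q ^ 2 * (1 + |s.im|) ^ 2 ∧
       (1 + |s.im|) ^ 2 ≤ 2 * ‖Z s‖ ∧
       |s.im * (Z s).arg| ≤ K) := by
    intro s h1 h2
    have h := PL_aux_strip m hm0 s (hmem s h1 h2)
    rw [hZ_def, hK_def, hQ_def]
    exact h
  have habs1 : ∀ s : ℂ, a ≤ s.re → s.re ≤ b → 1 ≤ ‖Z s‖ := by
    intro s h1 h2
    have f1 := (facts s h1 h2).1
    have := Complex.re_le_norm (Z s)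
    linarith [sq_nonneg s.im]
  have habspos : ∀ s : ℂ, a ≤ s.re → s.re ≤ b → 0 < ‖Z s‖ := by
    intro s h1 h2
    linarith [habs1 s h1 h2]
  have hL0 : ∀ s : ℂ, a ≤ s.re → s.re ≤ b → 0 ≤ Real.log (‖Z s‖) := by
    intro s h1 h2
    exact Real.log_nonneg (habs1 s h1 h2)
  have hEdiff : ∀ s : ℂ, a ≤ s.re → s.re ≤ b → DifferentiableAt ℂ E s := by
    intro s h1 h2
    have hrepos : 0 < (Z s).re := by
      have := (facts s h1 h2).1
      linarith [sq_nonneg s.im]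
    have hslit : Z s ∈ Complex.slitPlane := Complex.mem_slitPlane_iff.mpr (Or.inl hrepos)
    have hZd : DifferentiableAt ℂ Z s := by
      rw [hZ_def]
      exact (differentiableAt_const _).sub (differentiableAt_pow 2)
    have hlog : DifferentiableAt ℂ (fun w => Complex.log (Z w)) s :=
      (Complex.differentiableAt_log hslit).comp s hZd
    have hg : DifferentiableAt ℂ (fun w => -(κ:ℂ) * ((b:ℂ) - w) * Complex.log (Z w)) s :=
      (((differentiableAt_const _).sub differentiableAt_id).const_mul _).mul hlog
    rw [hE_def]
    exact hg.cexp
  have hEnorm : ∀ s : ℂ, ‖E s‖ = Real.exp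
      (-(κ * ((b - s.re) * Real.log (‖Z s‖) + s.im * (Z s).arg))) := by
    intro s
    rw [hE_def]
    exact PL_aux_normE κ b s (Z s)
  have hEupper : ∀ s : ℂ, a ≤ s.re → s.re ≤ b → ‖E s‖ ≤ Real.exp (κ * K) := by
    intro s h1 h2
    obtain ⟨f1, f2, f3, f4⟩ := facts s h1 h2
    have hL := hL0 s h1 h2
    rw [hEnorm s]
    apply Real.exp_le_exp.mpr
    have h5 : -(s.im * (Z s).arg) ≤ K := le_trans (neg_le_abs _) f4
    linarith [mul_nonneg (mul_nonneg hκ0 (sub_nonneg.mpr h2)) hL,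
      mul_le_mul_of_nonneg_left h5 hκ0]
  -- boundary bound on re = a
  have hEa : ∀ s : ℂ, s.re = a → ‖f s * E s‖ ≤ M := by
    intro s hsre
    have h1 : a ≤ s.re := le_of_eq hsre.symm
    have h2 : s.re ≤ b := by rw [hsre]; exact hab.le
    obtain ⟨f1, f2, f3, f4⟩ := facts s h1 h2
    have habsp := habspos s h1 h2
    have hL := hL0 s h1 h2
    have hfs : ‖f s‖ ≤ A * (1 + |s.im|) ^ α := by
      have hseq : s = (a:ℂ) + (s.im : ℝ) * I := by
        apply Complex.ext <;> simp [hsre]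
      calc ‖f s‖ = ‖f ((a:ℂ) + (s.im : ℝ) * I)‖ := by rw [← hseq]
      _ ≤ A * (1 + |s.im|) ^ α := hfa s.im
    have hexpE : ‖E s‖ ≤ Real.exp (-(α / 2) * Real.log (‖Z s‖)) *
        Real.exp (κ * K) := by
      rw [hEnorm s, ← Real.exp_add]
      apply Real.exp_le_exp.mpr
      have h5 : -(s.im * (Z s).arg) ≤ K := le_trans (neg_le_abs _) f4
      have h6 : κ * -(s.im * (Z s).arg) ≤ κ * K := mul_le_mul_of_nonneg_left h5 hκ0
      have h8 : κ * ((b - s.re) * Real.log (‖Z s‖))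
          = α / 2 * Real.log (‖Z s‖) := by
        rw [hsre, ← mul_assoc, hκba]
      linarith [h6, h8]
    have hrp1 : (1 + |s.im|) ^ α ≤ (2:ℝ) ^ (α / 2) * ‖Z s‖ ^ (α / 2) := by
      have e1 : (1 + |s.im|) ^ α = ((1 + |s.im|) ^ (2:ℕ)) ^ (α / 2) := by
        rw [← Real.rpow_natCast (1 + |s.im|) 2, ← Real.rpow_mul (by positivity)]
        congr 1
        all_goals (push_cast; ring)
      rw [e1]
      calc ((1 + |s.im|) ^ (2:ℕ)) ^ (α / 2) ≤ (2 * ‖Z s‖) ^ (α / 2) :=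
            Real.rpow_le_rpow (by positivity) f3 (by positivity)
      _ = (2:ℝ) ^ (α / 2) * ‖Z s‖ ^ (α / 2) :=
            Real.mul_rpow (by norm_num) (norm_nonneg _)
    have hexpL : Real.exp (-(α / 2) * Real.log (‖Z s‖))
        = ‖Z s‖ ^ (-(α / 2)) := by
      rw [Real.rpow_def_of_pos habsp]
      congr 1; ring
    have hcancel : ‖Z s‖ ^ (α / 2) * ‖Z s‖ ^ (-(α / 2)) = 1 := by
      rw [← Real.rpow_add habsp]
      simp
    calc ‖f s * E s‖ = ‖f s‖ * ‖E s‖ := norm_mul _ _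
    _ ≤ (A * (1 + |s.im|) ^ α) *
        (Real.exp (-(α / 2) * Real.log (‖Z s‖)) * Real.exp (κ * K)) :=
          mul_le_mul hfs hexpE (norm_nonneg _) (by positivity)
    _ ≤ (A * ((2:ℝ) ^ (α / 2) * ‖Z s‖ ^ (α / 2))) *
        (‖Z s‖ ^ (-(α / 2)) * Real.exp (κ * K)) := by
          rw [hexpL]
          apply mul_le_mul_of_nonneg_right (mul_le_mul_of_nonneg_left hrp1 hA)
          positivity
    _ = (A * (2:ℝ) ^ (α / 2) * Real.exp (κ * K)) *
        (‖Z s‖ ^ (α / 2) * ‖Z s‖ ^ (-(α / 2))) := by ring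
    _ = A * (2:ℝ) ^ (α / 2) * Real.exp (κ * K) := by rw [hcancel, mul_one]
    _ ≤ M := by
          rw [hM_def]
          exact mul_le_mul_of_nonneg_right (le_max_left _ _) (Real.exp_nonneg _)
  -- boundary bound on re = b
  have hEb : ∀ s : ℂ, s.re = b → ‖f s * E s‖ ≤ M := by
    intro s hsre
    have h1 : a ≤ s.re := by rw [hsre]; exact hab.le
    have h2 : s.re ≤ b := le_of_eq hsre
    have hfs : ‖f s‖ ≤ B := by
      have hseq : s = (b:ℂ) + (s.im : ℝ) * I := by
        apply Complex.ext <;> simp [hsre]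
      calc ‖f s‖ = ‖f ((b:ℂ) + (s.im : ℝ) * I)‖ := by rw [← hseq]
      _ ≤ B := hfb s.im
    calc ‖f s * E s‖ = ‖f s‖ * ‖E s‖ := norm_mul _ _
    _ ≤ B * Real.exp (κ * K) := mul_le_mul hfs (hEupper s h1 h2) (norm_nonneg _) hB
    _ ≤ M := by
          rw [hM_def]
          exact mul_le_mul_of_nonneg_right (le_max_right _ _) (Real.exp_nonneg _)
  -- Phragmen-Lindelof
  have hset1 : (Complex.re ⁻¹' Set.Ioo a b) = {s : ℂ | a < s.re ∧ s.re < b} := by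
    ext w; simp [Set.mem_Ioo]
  have hPL : ∀ s : ℂ, a ≤ s.re → s.re ≤ b → ‖f s * E s‖ ≤ M := by
    intro s h1 h2
    refine PhragmenLindelof.vertical_strip (f := fun w => f w * E w) (a := a) (b := b)
      ?_ ?_ (fun z hz => hEa z hz) (fun z hz => hEb z hz) h1 h2
    · constructor
      · rw [hset1]
        exact fun w hw => (hdiff w hw).mul (hEdiff w hw.1.le hw.2.le).differentiableWithinAt
      · rw [Complex.closure_preimage_re, closure_Ioo hab.ne]
        have hset2 : (Complex.re ⁻¹' Set.Icc a b) = {s : ℂ | a ≤ s.re ∧ s.re ≤ b} := by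
          ext w; simp [Set.mem_Icc]
        rw [hset2]
        exact fun w hw => (hcont w hw).mul
          (hEdiff w hw.1 hw.2).continuousAt.continuousWithinAt
    · obtain ⟨C₀, c₀, hc₀, hbd⟩ := hord
      refine ⟨π / (2 * (b - a)), ?_, 1, ?_⟩
      · have h2ba : b - a < 2 * (b - a) := by linarith
        exact div_lt_div_of_pos_left Real.pi_pos hba h2ba
      · rw [Asymptotics.isBigO_iff]
        refine ⟨max C₀ 0 * Real.exp (κ * K), ?_⟩
        have hev1 : ∀ᶠ w : ℂ in (Filter.comap (_root_.abs ∘ Complex.im) Filter.atTop ⊓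
            Filter.principal (Complex.re ⁻¹' Set.Ioo a b)),
            w ∈ Complex.re ⁻¹' Set.Ioo a b :=
          Filter.Eventually.filter_mono inf_le_right
            (Filter.eventually_principal.mpr fun x hx => hx)
        have hev2 : ∀ᶠ x : ℝ in Filter.atTop,
            x ^ c₀ ≤ Real.exp (π / (2 * (b - a)) * x) := by
          have hlit := isLittleO_rpow_exp_pos_mul_atTop c₀
            (show 0 < π / (2 * (b - a)) by positivity)
          filter_upwards [hlit.def one_pos] with x hx
          calc x ^ c₀ ≤ |x ^ c₀| := le_abs_self _
          _ = ‖x ^ c₀‖ := (Real.norm_eq_abs _).symm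
          _ ≤ 1 * ‖Real.exp (π / (2 * (b - a)) * x)‖ := hx
          _ = Real.exp (π / (2 * (b - a)) * x) := by
                rw [one_mul, Real.norm_eq_abs, abs_of_pos (Real.exp_pos _)]
        have hten : Filter.Tendsto (_root_.abs ∘ Complex.im)
            (Filter.comap (_root_.abs ∘ Complex.im) Filter.atTop ⊓
              Filter.principal (Complex.re ⁻¹' Set.Ioo a b)) Filter.atTop :=
          Filter.tendsto_comap.mono_left inf_le_left
        have hev2' := hten.eventually hev2
        filter_upwards [hev1, hev2'] with w hw1 hw2
        have hwa : a ≤ w.re := (Set.mem_preimage.mp hw1).1.le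
        have hwb : w.re ≤ b := (Set.mem_preimage.mp hw1).2.le
        have hfw : ‖f w‖ ≤ max C₀ 0 * Real.exp (|w.im| ^ c₀) :=
          le_trans (hbd w hwa hwb)
            (mul_le_mul_of_nonneg_right (le_max_left _ _) (Real.exp_nonneg _))
        have hEw := hEupper w hwa hwb
        have hw2' : |w.im| ^ c₀ ≤ Real.exp (π / (2 * (b - a)) * |w.im|) := hw2
        calc ‖f w * E w‖ = ‖f w‖ * ‖E w‖ := norm_mul _ _
        _ ≤ (max C₀ 0 * Real.exp (|w.im| ^ c₀)) * Real.exp (κ * K) :=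
              mul_le_mul hfw hEw (norm_nonneg _) (by positivity)
        _ ≤ (max C₀ 0 * Real.exp (Real.exp (π / (2 * (b - a)) * |w.im|))) *
              Real.exp (κ * K) := by
              have h0 : (0:ℝ) ≤ max C₀ 0 := le_max_right _ _
              exact mul_le_mul_of_nonneg_right
                (mul_le_mul_of_nonneg_left (Real.exp_le_exp.mpr hw2') h0)
                (Real.exp_nonneg _)
        _ = max C₀ 0 * Real.exp (κ * K) *
              ‖Real.exp (1 * Real.exp (π / (2 * (b - a)) * |w.im|))‖ := by
              rw [one_mul, Real.norm_eq_abs, abs_of_pos (Real.exp_pos _)]; ring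
  -- conclusion
  set s : ℂ := (σ:ℂ) + (t:ℂ) * I with hs_def
  clear_value s
  have hsre : s.re = σ := by simp [hs_def]
  have hsim : s.im = t := by simp [hs_def]
  have h1 : a ≤ s.re := by rw [hsre]; exact hσa
  have h2 : s.re ≤ b := by rw [hsre]; exact hσb
  obtain ⟨f1, f2, f3, f4⟩ := facts s h1 h2
  have habsp := habspos s h1 h2
  have hL := hL0 s h1 h2
  have hPLs := hPL s h1 h2
  have hfs_eq : ‖f s‖ = ‖f s * E s‖ *
      Real.exp (κ * ((b - s.re) * Real.log (‖Z s‖) + s.im * (Z s).arg)) := by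
    rw [norm_mul, hEnorm s, mul_assoc, ← Real.exp_add]
    simp
  have hR : Real.exp (κ * ((b - s.re) * Real.log (‖Z s‖) + s.im * (Z s).arg))
      ≤ Real.exp (κ * ((b - s.re) * Real.log (‖Z s‖))) * Real.exp (κ * K) := by
    rw [← Real.exp_add]
    apply Real.exp_le_exp.mpr
    have h5 : s.im * (Z s).arg ≤ K := le_trans (le_abs_self _) f4
    linarith [mul_le_mul_of_nonneg_left h5 hκ0]
  have hrpow : Real.exp (κ * ((b - s.re) * Real.log (‖Z s‖)))
      = ‖Z s‖ ^ (κ * (b - s.re)) := by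
    rw [Real.rpow_def_of_pos habsp]
    congr 1; ring
  have hexp_le : ‖Z s‖ ^ (κ * (b - s.re))
      ≤ (2 * Q ^ 2) ^ (α / 2) * (1 + |t|) ^ (α * (b - σ) / (b - a)) := by
    have hexp0 : 0 ≤ κ * (b - s.re) := mul_nonneg hκ0 (by rw [hsre]; linarith)
    calc ‖Z s‖ ^ (κ * (b - s.re))
        ≤ (2 * Q ^ 2 * (1 + |s.im|) ^ 2) ^ (κ * (b - s.re)) :=
          Real.rpow_le_rpow (norm_nonneg _) f2 hexp0
    _ = (2 * Q ^ 2) ^ (κ * (b - s.re)) * ((1 + |s.im|) ^ 2) ^ (κ * (b - s.re)) :=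
          Real.mul_rpow (by positivity) (by positivity)
    _ ≤ (2 * Q ^ 2) ^ (α / 2) * (1 + |t|) ^ (α * (b - σ) / (b - a)) := by
          have e1 : ((1 + |s.im|) ^ 2) ^ (κ * (b - s.re))
              = (1 + |s.im|) ^ (2 * (κ * (b - s.re))) := by
            rw [← Real.rpow_natCast (1 + |s.im|) 2, ← Real.rpow_mul (by positivity)]
            congr 1
            all_goals (push_cast; ring)
          have e2 : 2 * (κ * (b - s.re)) = α * (b - σ) / (b - a) := by
            rw [hsre, hκ_def]
            field_simp
          rw [e1, e2, hsim]
          apply mul_le_mul_of_nonneg_right ?_ (Real.rpow_nonneg (by positivity) _)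
          apply Real.rpow_le_rpow_of_exponent_le (by nlinarith [hQ1])
          rw [hsre]
          linarith [hκba, mul_le_mul_of_nonneg_left (show b - σ ≤ b - a by linarith) hκ0]
  have hrpow_nonneg : (0:ℝ) ≤ (1 + |t|) ^ (α * (b - σ) / (b - a)) :=
    Real.rpow_nonneg (by positivity) _
  calc ‖f s‖ = ‖f s * E s‖ *
      Real.exp (κ * ((b - s.re) * Real.log (‖Z s‖) + s.im * (Z s).arg)) := hfs_eq
  _ ≤ M * (Real.exp (κ * ((b - s.re) * Real.log (‖Z s‖))) * Real.exp (κ * K)) :=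
        mul_le_mul hPLs hR (Real.exp_nonneg _) hM0
  _ = M * Real.exp (κ * K) * ‖Z s‖ ^ (κ * (b - s.re)) := by rw [hrpow]; ring
  _ ≤ M * Real.exp (κ * K) *
      ((2 * Q ^ 2) ^ (α / 2) * (1 + |t|) ^ (α * (b - σ) / (b - a))) :=
        mul_le_mul_of_nonneg_left hexp_le (mul_nonneg hM0 (Real.exp_nonneg _))
  _ = (M * Real.exp (κ * K) * (2 * Q ^ 2) ^ (α / 2)) *
      (1 + |t|) ^ (α * (b - σ) / (b - a)) := by ring
  _ ≤ (M * Real.exp (κ * K) * (2 * Q ^ 2) ^ (α / 2) + 1) *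
      (1 + |t|) ^ (α * (b - σ) / (b - a)) := by
        have := hrpow_nonneg
        nlinarith [this]
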